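/- Let S be a semigroup and A a finite set with more than one element. The shift action of S on A^S (with the prodiscrete topology) is expansive if and only if there exists a finite subset K ⊆ S with S = K·S (every element of S factors as k·s with k ∈ K, s ∈ S). -/

import Mathlib

open Filter Set

/-- On a finite space with discrete topology, the uniformity is the principal
filter of the identity relation. -/
lemma uniformity_eq_idRel_of_finite {A : Type*} [Finite A] [UniformSpace A]
    [DiscreteTopology A] : uniformity A = Filter.principal SetRel.id := by
  have h : ∀ x : A, ∃ V ∈ uniformity A, UniformSpace.ball x V ⊆ {x} := by
    intro x
    have hx : ({x} : Set A) ∈ nhds x := by simp [nhds_discrete]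
    exact UniformSpace.mem_nhds_iff.1 hx
  choose V hV hVb using h
  have hmem : (⋂ x, V x) ∈ uniformity A := Filter.iInter_mem.2 hV
  have hid : SetRel.id ∈ uniformity A := by
    filter_upwards [hmem] with p hp
    have hb : p.2 ∈ UniformSpace.ball p.1 (V p.1) := mem_iInter.1 hp p.1
    have := hVb p.1 hb
    simp only [mem_singleton_iff] at this
    simp [SetRel.id, this]
  refine le_antisymm (Filter.le_principal_iff.2 hid) refl_le_uniformity

/-- The shift action of a semigroup `S` on `A^S` (with the prodiscrete topology, `A` a
finite set with more than one element) is expansive iff there is a finite `K ⊆ S` with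
`S = K·S`. -/
theorem stmt_6 {S A : Type*} [Semigroup S] [Finite A] [Nontrivial A]
    [UniformSpace A] [DiscreteTopology A] :
    (∃ E ∈ uniformity (S → A), ∀ x y : S → A, x ≠ y →
        ∃ s : S, ((fun t => x (t * s), fun t => y (t * s)) : (S → A) × (S → A)) ∉ E)
    ↔ ∃ K : Finset S, ∀ s : S, ∃ k ∈ K, ∃ t : S, s = k * t := by
  classical
  have hA : uniformity A = Filter.principal SetRel.id := uniformity_eq_idRel_of_finite
  have hPi : uniformity (S → A)
      = ⨅ s : S, Filter.comap (fun p : (S → A) × (S → A) => (p.1 s, p.2 s))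
          (Filter.principal SetRel.id) := by
    rw [Pi.uniformity]; simp_rw [hA]
  constructor
  · rintro ⟨E, hE, hexp⟩
    rw [hPi, Filter.mem_iInf] at hE
    obtain ⟨I, hIfin, V, hV, hEeq⟩ := hE
    refine ⟨hIfin.toFinset, fun s => ?_⟩
    by_contra hcon
    push_neg at hcon
    obtain ⟨a, b, hab⟩ := exists_pair_ne A
    set x : S → A := fun _ => a with hx
    set y : S → A := fun u => if u = s then b else a with hy
    have hxy : x ≠ y := by
      intro h
      have := congrFun h s
      simp [hx, hy] at this
      exact hab this
    obtain ⟨t, ht⟩ := hexp x y hxy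
    apply ht
    have hne : ∀ k : S, (k ∈ I) → k * t ≠ s := by
      intro k hk h
      exact (hcon k (by simpa using hk)) t h.symm
    rw [hEeq]
    rw [mem_iInter]
    rintro ⟨i, hi⟩
    have hVi := hV ⟨i, hi⟩
    rw [Filter.mem_comap] at hVi
    obtain ⟨W, hW, hWsub⟩ := hVi
    rw [Filter.mem_principal] at hW
    apply hWsub
    apply hW
    simp only [mem_preimage]
    have : x (i * t) = y (i * t) := by
      simp [hx, hy, hne i hi]
    simpa [SetRel.id] using this
  · rintro ⟨K, hK⟩
    refine ⟨{p : (S → A) × (S → A) | ∀ k ∈ K, p.1 k = p.2 k}, ?_, ?_⟩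
    · rw [hPi]
      have : {p : (S → A) × (S → A) | ∀ k ∈ K, p.1 k = p.2 k}
          = ⋂ k ∈ K, {p : (S → A) × (S → A) | p.1 k = p.2 k} := by
        ext p; simp
      rw [this]
      refine (Filter.biInter_mem K.finite_toSet).2 fun k _ => ?_
      refine Filter.mem_iInf_of_mem k ?_
      rw [Filter.mem_comap]
      exact ⟨SetRel.id, Filter.mem_principal_self _, by intro p hp; simpa [SetRel.id] using hp⟩
    · intro x y hxy
      have : ∃ u : S, x u ≠ y u := by
        by_contra h
        push_neg at h
        exact hxy (funext h)
      obtain ⟨u, hu⟩ := this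
      obtain ⟨k, hkK, t, hkt⟩ := hK u
      refine ⟨t, fun h => ?_⟩
      have := h k hkK
      simp only at this
      rw [← hkt] at this
      exact hu this
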